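/- Let 0 < β < 1, 0 < η < 1, λ* > 0, b(i) = i+1, d(i) = β(i+1)^η. Define log p_k up to additive constants by -∑_{i=0}^{k} log(1 + (λ* + β(i+1)^η)/(i+1)). Then this sum divided by k^η converges to β/η as k → ∞; in particular log p_k ~ -(β/η) k^η (stretched exponential decay). -/

import Mathlib

open Real Filter Finset Set

lemma mvt_rpow (γ : ℝ) (hγ0 : 0 < γ) {a b : ℝ} (ha : 0 ≤ a) (hab : a < b) :
    ∃ c ∈ Set.Ioo a b, γ * c ^ (γ - 1) = (b ^ γ - a ^ γ) / (b - a) := by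
  have hcont : ContinuousOn (fun x : ℝ => x ^ γ) (Set.Icc a b) :=
    (Real.continuous_rpow_const hγ0.le).continuousOn
  have hderiv : ∀ x ∈ Set.Ioo a b, HasDerivAt (fun x : ℝ => x ^ γ) (γ * x ^ (γ - 1)) x := by
    intro x hx
    exact Real.hasDerivAt_rpow_const (Or.inl (lt_of_le_of_lt ha hx.1).ne') 
  obtain ⟨c, hc, hc'⟩ := exists_hasDerivAt_eq_slope (fun x : ℝ => x ^ γ)
    (fun x => γ * x ^ (γ - 1)) hab hcont hderiv
  exact ⟨c, hc, hc'⟩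

lemma rpow_diff_lower (γ : ℝ) (hγ1 : γ ≤ 1) (hγ0 : 0 < γ) {a b : ℝ} (ha : 0 ≤ a)
    (hab : a < b) : γ * b ^ (γ - 1) * (b - a) ≤ b ^ γ - a ^ γ := by
  obtain ⟨c, hc, heq⟩ := mvt_rpow γ hγ0 ha hab
  have hc0 : 0 < c := lt_of_le_of_lt ha hc.1
  have h1 : b ^ (γ - 1) ≤ c ^ (γ - 1) :=
    Real.rpow_le_rpow_of_nonpos hc0 hc.2.le (by linarith)
  have hba : 0 < b - a := by linarith
  have : b ^ γ - a ^ γ = γ * c ^ (γ - 1) * (b - a) := by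
    field_simp at heq; linarith [heq]
  rw [this]
  have := mul_le_mul_of_nonneg_left h1 hγ0.le
  nlinarith

lemma rpow_diff_upper (γ : ℝ) (hγ1 : γ ≤ 1) (hγ0 : 0 < γ) {a b : ℝ} (ha : 0 < a)
    (hab : a < b) : b ^ γ - a ^ γ ≤ γ * a ^ (γ - 1) * (b - a) := by
  obtain ⟨c, hc, heq⟩ := mvt_rpow γ hγ0 ha.le hab
  have h1 : c ^ (γ - 1) ≤ a ^ (γ - 1) :=
    Real.rpow_le_rpow_of_nonpos ha hc.1.le (by linarith)
  have hba : 0 < b - a := by linarith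
  have : b ^ γ - a ^ γ = γ * c ^ (γ - 1) * (b - a) := by
    field_simp at heq; linarith [heq]
  rw [this]
  have := mul_le_mul_of_nonneg_left h1 hγ0.le
  nlinarith

lemma sum_rpow_upper (γ : ℝ) (hγ1 : γ ≤ 1) (hγ0 : 0 < γ) (n : ℕ) :
    ∑ i ∈ Finset.range n, ((i : ℝ) + 1) ^ (γ - 1) ≤ (n : ℝ) ^ γ / γ := by
  have key : ∀ i ∈ Finset.range n, ((i : ℝ) + 1) ^ (γ - 1)
      ≤ ((i : ℝ) + 1) ^ γ / γ - (i : ℝ) ^ γ / γ := by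
    intro i _
    have h := rpow_diff_lower γ hγ1 hγ0 (a := (i:ℝ)) (b := (i:ℝ)+1)
      (Nat.cast_nonneg i) (by linarith)
    rw [div_sub_div_same, le_div_iff₀ hγ0]
    nlinarith
  calc ∑ i ∈ Finset.range n, ((i : ℝ) + 1) ^ (γ - 1)
      ≤ ∑ i ∈ Finset.range n, (((i : ℝ) + 1) ^ γ / γ - (i : ℝ) ^ γ / γ) :=
        Finset.sum_le_sum key
    _ = (n : ℝ) ^ γ / γ := by
        have := Finset.sum_range_sub (fun i : ℕ => ((i : ℝ)) ^ γ / γ) n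
        simp only [Nat.cast_add, Nat.cast_one] at this ⊢
        rw [this, Nat.cast_zero, Real.zero_rpow hγ0.ne', zero_div, sub_zero]

lemma sum_rpow_lower (γ : ℝ) (hγ1 : γ ≤ 1) (hγ0 : 0 < γ) (n : ℕ) :
    (((n : ℝ) + 1) ^ γ - 1) / γ ≤ ∑ i ∈ Finset.range n, ((i : ℝ) + 1) ^ (γ - 1) := by
  have key : ∀ i ∈ Finset.range n, ((i : ℝ) + 2) ^ γ / γ - ((i : ℝ) + 1) ^ γ / γ
      ≤ ((i : ℝ) + 1) ^ (γ - 1) := by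
    intro i _
    have h := rpow_diff_upper γ hγ1 hγ0 (a := (i:ℝ)+1) (b := (i:ℝ)+2)
      (by positivity) (by linarith)
    rw [div_sub_div_same, div_le_iff₀ hγ0]
    nlinarith
  calc (((n : ℝ) + 1) ^ γ - 1) / γ
      = ∑ i ∈ Finset.range n, (((i : ℝ) + 2) ^ γ / γ - ((i : ℝ) + 1) ^ γ / γ) := by
        have := Finset.sum_range_sub (fun i : ℕ => ((i : ℝ) + 1) ^ γ / γ) n
        simp only [Nat.cast_add, Nat.cast_one] at this
        rw [Nat.cast_zero] at this
        calc (((n : ℝ) + 1) ^ γ - 1) / γ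
            = (↑n + 1) ^ γ / γ - ((0:ℝ) + 1) ^ γ / γ := by
              rw [zero_add, Real.one_rpow]; ring
          _ = ∑ i ∈ Finset.range n, (((i:ℝ) + 1 + 1) ^ γ / γ - ((i:ℝ) + 1) ^ γ / γ) :=
              this.symm
          _ = _ := by
              apply Finset.sum_congr rfl
              intro i _
              norm_num [show (i:ℝ)+1+1 = (i:ℝ)+2 from by ring]
    _ ≤ _ := Finset.sum_le_sum key

lemma log_one_add_ge (x : ℝ) (hx : 0 ≤ x) : x - x ^ 2 ≤ Real.log (1 + x) := by
  have h1 : (0:ℝ) < 1 + x := by linarith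
  have h2 := Real.log_le_sub_one_of_pos (show (0:ℝ) < (1+x)⁻¹ by positivity)
  rw [Real.log_inv] at h2
  have hinv : (1 + x) * (1 + x)⁻¹ = 1 := mul_inv_cancel₀ h1.ne'
  nlinarith [mul_nonneg (mul_nonneg hx hx) hx, (by positivity : (0:ℝ) ≤ (1+x)⁻¹)]

lemma log_one_add_le (x : ℝ) (hx : 0 ≤ x) : Real.log (1 + x) ≤ x := by
  have := Real.log_le_sub_one_of_pos (show (0:ℝ) < 1 + x by linarith)
  linarith

lemma term_bounds (β η lam γ : ℝ) (hβ0 : 0 < β) (hη0 : 0 < η) (hη1 : η < 1)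
    (hlam : 0 < lam) (hγ0 : 0 < γ) (hγ1 : γ ≤ 1) (hγ : 2*η - 2 ≤ γ - 1) (i : ℕ) :
    β * ((i:ℝ)+1) ^ (η-1) - (lam+β)^2 * ((i:ℝ)+1) ^ (γ-1)
      ≤ Real.log (1 + (lam + β * ((i:ℝ)+1) ^ η) / ((i:ℝ)+1))
    ∧ Real.log (1 + (lam + β * ((i:ℝ)+1) ^ η) / ((i:ℝ)+1))
      ≤ β * ((i:ℝ)+1) ^ (η-1) + lam * ((i:ℝ)+1) ^ (γ-1) := by
  set p : ℝ := (i:ℝ) + 1 with hp_def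
  have hp : 0 < p := by positivity
  have hp1 : 1 ≤ p := by simp [hp_def]
  have hpe : p ^ (η-1) = p ^ η / p := Real.rpow_sub_one hp.ne' η
  have hpη : 0 ≤ p ^ η := Real.rpow_nonneg hp.le η
  set x : ℝ := (lam + β * p ^ η) / p with hx_def
  have hx0 : 0 ≤ x := by positivity
  have hxsplit : x = lam / p + β * p ^ (η-1) := by rw [hpe, hx_def]; field_simp
  have hinvle : ∀ c : ℝ, -1 ≤ c - 1 → p⁻¹ ≤ p ^ (c-1) := by
    intro c hc
    have := Real.rpow_le_rpow_of_exponent_le hp1 hc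
    rwa [Real.rpow_neg_one] at this
  have hlam_p : lam / p ≤ lam * p ^ (γ-1) := by
    rw [div_eq_mul_inv]
    exact mul_le_mul_of_nonneg_left (hinvle γ (by linarith)) hlam.le
  have hlam_p' : lam / p ≤ lam * p ^ (η-1) := by
    rw [div_eq_mul_inv]
    exact mul_le_mul_of_nonneg_left (hinvle η (by linarith)) hlam.le
  have hxle : x ≤ (lam + β) * p ^ (η-1) := by
    rw [hxsplit]; nlinarith [Real.rpow_nonneg hp.le (η-1)]
  have hxge : β * p ^ (η-1) ≤ x := by
    rw [hxsplit]
    have : 0 ≤ lam / p := by positivity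
    linarith
  have hsq : x ^ 2 ≤ (lam+β)^2 * p ^ (γ-1) := by
    have h1 : x ^ 2 ≤ ((lam+β) * p ^ (η-1))^2 := by
      apply sq_le_sq' _ hxle
      nlinarith [Real.rpow_nonneg hp.le (η-1)]
    have h2 : ((lam+β) * p ^ (η-1))^2 = (lam+β)^2 * p ^ ((η-1)+(η-1)) := by
      rw [Real.rpow_add hp]; ring
    have h3 : p ^ ((η-1)+(η-1)) ≤ p ^ (γ-1) :=
      Real.rpow_le_rpow_of_exponent_le hp1 (by linarith)
    nlinarith [sq_nonneg (lam+β)]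
  constructor
  · have hl := log_one_add_ge x hx0
    linarith
  · have hu := log_one_add_le x hx0
    have : x ≤ β * p ^ (η-1) + lam * p ^ (γ-1) := by rw [hxsplit]; linarith
    linarith

lemma sum_bounds (β η lam γ : ℝ) (hβ0 : 0 < β) (hη0 : 0 < η) (hη1 : η < 1)
    (hlam : 0 < lam) (hγ0 : 0 < γ) (hγ1 : γ ≤ 1) (hγ : 2*η - 2 ≤ γ - 1) (n : ℕ) :
    β * ((((n:ℝ)+1) ^ η - 1)/η) - (lam+β)^2 * ((n:ℝ) ^ γ / γ)
      ≤ (∑ i ∈ Finset.range n, Real.log (1 + (lam + β * ((i:ℝ)+1) ^ η) / ((i:ℝ)+1)))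
    ∧ (∑ i ∈ Finset.range n, Real.log (1 + (lam + β * ((i:ℝ)+1) ^ η) / ((i:ℝ)+1)))
      ≤ β * ((n:ℝ) ^ η / η) + lam * ((n:ℝ) ^ γ / γ) := by
  have hterm := fun i => term_bounds β η lam γ hβ0 hη0 hη1 hlam hγ0 hγ1 hγ i
  have hsη_up := sum_rpow_upper η hη1.le hη0 n
  have hsη_lo := sum_rpow_lower η hη1.le hη0 n
  have hsγ_up := sum_rpow_upper γ hγ1 hγ0 n
  constructor
  · calc β * ((((n:ℝ)+1) ^ η - 1)/η) - (lam+β)^2 * ((n:ℝ) ^ γ / γ)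
        ≤ β * (∑ i ∈ Finset.range n, ((i:ℝ)+1) ^ (η-1))
            - (lam+β)^2 * (∑ i ∈ Finset.range n, ((i:ℝ)+1) ^ (γ-1)) := by
          have h1 := mul_le_mul_of_nonneg_left hsη_lo hβ0.le
          have h2 := mul_le_mul_of_nonneg_left hsγ_up (sq_nonneg (lam+β))
          linarith
      _ = ∑ i ∈ Finset.range n,
            (β * ((i:ℝ)+1) ^ (η-1) - (lam+β)^2 * ((i:ℝ)+1) ^ (γ-1)) := by
          rw [Finset.sum_sub_distrib, ← Finset.mul_sum, ← Finset.mul_sum]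
      _ ≤ _ := Finset.sum_le_sum (fun i _ => (hterm i).1)
  · calc (∑ i ∈ Finset.range n, Real.log (1 + (lam + β * ((i:ℝ)+1) ^ η) / ((i:ℝ)+1)))
        ≤ ∑ i ∈ Finset.range n,
            (β * ((i:ℝ)+1) ^ (η-1) + lam * ((i:ℝ)+1) ^ (γ-1)) :=
          Finset.sum_le_sum (fun i _ => (hterm i).2)
      _ = β * (∑ i ∈ Finset.range n, ((i:ℝ)+1) ^ (η-1))
            + lam * (∑ i ∈ Finset.range n, ((i:ℝ)+1) ^ (γ-1)) := by
          rw [Finset.sum_add_distrib, ← Finset.mul_sum, ← Finset.mul_sum]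
      _ ≤ _ := by
          have h1 := mul_le_mul_of_nonneg_left hsη_up hβ0.le
          have h2 := mul_le_mul_of_nonneg_left hsγ_up hlam.le
          linarith


lemma div_le_div_of_nonneg_right' {a b c : ℝ} (h : a ≤ b) (hc : 0 < c) : a / c ≤ b / c := by
  gcongr

lemma ratio_tendsto (η : ℝ) (c : ℝ) (hc : 0 ≤ c) :
    Tendsto (fun k : ℕ => ((k:ℝ)+c) ^ η / (k:ℝ) ^ η) atTop (nhds 1) := by
  have hcast : Tendsto (fun k : ℕ => (k:ℝ)) atTop atTop := tendsto_natCast_atTop_atTop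
  have h1 : Tendsto (fun k : ℕ => ((k:ℝ)+c)/(k:ℝ)) atTop (nhds 1) := by
    have h0 : Tendsto (fun k : ℕ => 1 + c * ((k:ℝ))⁻¹) atTop (nhds (1 + c * 0)) :=
      tendsto_const_nhds.add (tendsto_const_nhds.mul hcast.inv_tendsto_atTop)
    rw [mul_zero, add_zero] at h0
    apply h0.congr'
    filter_upwards [Filter.eventually_ge_atTop 1] with k hk
    have hk0 : (k:ℝ) ≠ 0 := by positivity
    field_simp
  have h2 := (Real.continuousAt_rpow_const 1 η (Or.inl one_ne_zero)).tendsto.comp h1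
  rw [Real.one_rpow] at h2
  apply h2.congr'
  filter_upwards [Filter.eventually_ge_atTop 1] with k hk
  have hk0 : (0:ℝ) ≤ (k:ℝ) := Nat.cast_nonneg k
  simp only [Function.comp]
  rw [Real.div_rpow (by linarith) hk0]

lemma small_tendsto (η γ : ℝ) (hγ0 : 0 < γ) (hγη : γ < η) :
    Tendsto (fun k : ℕ => ((k:ℝ)+1) ^ γ / (k:ℝ) ^ η) atTop (nhds 0) := by
  have hcast : Tendsto (fun k : ℕ => (k:ℝ)+1) atTop atTop :=
    tendsto_atTop_add_const_right _ 1 tendsto_natCast_atTop_atTop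
  have h1 : Tendsto (fun k : ℕ => ((k:ℝ)+1) ^ (γ - η)) atTop (nhds 0) := by
    have := (tendsto_rpow_neg_atTop (by linarith : 0 < η - γ)).comp hcast
    simpa [Function.comp_def, neg_sub] using this
  have h2 := h1.mul (ratio_tendsto η 1 zero_le_one)
  rw [zero_mul] at h2
  apply h2.congr'
  filter_upwards [Filter.eventually_ge_atTop 1] with k hk
  have hk1 : (0:ℝ) < (k:ℝ)+1 := by positivity
  rw [Real.rpow_sub hk1]
  have hη : ((k:ℝ)+1) ^ η ≠ 0 := by positivity
  field_simp

theorem stmt_13 (β η lam : ℝ) (hβ0 : 0 < β) (hβ1 : β < 1) (hη0 : 0 < η) (hη1 : η < 1)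
    (hlam : 0 < lam) :
    Filter.Tendsto
      (fun k : ℕ => (∑ i ∈ Finset.range (k + 1),
          Real.log (1 + (lam + β * ((i : ℝ) + 1) ^ η) / ((i : ℝ) + 1))) / (k : ℝ) ^ η)
      Filter.atTop (nhds (β / η)) := by
  set γ := max (η/2) (2*η-1) with hγdef
  have hγ0 : 0 < γ := lt_of_lt_of_le (half_pos hη0) (le_max_left _ _)
  have hγη : γ < η := max_lt (by linarith) (by linarith)
  have hγ1 : γ ≤ 1 := by linarith
  have hγ2 : 2*η - 2 ≤ γ - 1 := by
    have := le_max_right (η/2) (2*η-1); linarith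
  set L : ℕ → ℝ := fun k => β/η * (((k:ℝ)+2) ^ η / (k:ℝ) ^ η)
      - β/η * ((k:ℝ) ^ η)⁻¹ - (lam+β)^2/γ * (((k:ℝ)+1) ^ γ / (k:ℝ) ^ η) with hLdef
  set U : ℕ → ℝ := fun k => β/η * (((k:ℝ)+1) ^ η / (k:ℝ) ^ η)
      + lam/γ * (((k:ℝ)+1) ^ γ / (k:ℝ) ^ η) with hUdef
  have hinv : Tendsto (fun k : ℕ => ((k:ℝ) ^ η)⁻¹) atTop (nhds 0) :=
    ((tendsto_rpow_atTop hη0).comp tendsto_natCast_atTop_atTop).inv_tendsto_atTop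
  have hL : Tendsto L atTop (nhds (β/η)) := by
    have t1 := (ratio_tendsto η 2 (by norm_num)).const_mul (β/η)
    have t2 := hinv.const_mul (β/η)
    have t3 := (small_tendsto η γ hγ0 hγη).const_mul ((lam+β)^2/γ)
    have := (t1.sub t2).sub t3
    simpa using this
  have hU : Tendsto U atTop (nhds (β/η)) := by
    have t1 := (ratio_tendsto η 1 zero_le_one).const_mul (β/η)
    have t3 := (small_tendsto η γ hγ0 hγη).const_mul (lam/γ)
    have := t1.add t3
    simpa using this
  apply tendsto_of_tendsto_of_tendsto_of_le_of_le' hL hU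
  · filter_upwards [Filter.eventually_ge_atTop 1] with k hk
    have hk0 : (0:ℝ) < (k:ℝ) := by exact_mod_cast Nat.pos_of_ne_zero (by omega)
    have hkpos : (0:ℝ) < (k:ℝ) ^ η := Real.rpow_pos_of_pos hk0 η
    have hb := (sum_bounds β η lam γ hβ0 hη0 hη1 hlam hγ0 hγ1 hγ2 (k+1)).1
    push_cast at hb
    rw [show ((k:ℝ)+1+1) = ((k:ℝ)+2) from by ring] at hb
    have heq : L k = (β * ((((k:ℝ)+2) ^ η - 1)/η)
        - (lam+β)^2 * (((k:ℝ)+1) ^ γ / γ)) / (k:ℝ) ^ η := by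
      rw [hLdef]
      field_simp
    rw [heq]
    exact div_le_div_of_nonneg_right' hb hkpos
  · filter_upwards [Filter.eventually_ge_atTop 1] with k hk
    have hk0 : (0:ℝ) < (k:ℝ) := by exact_mod_cast Nat.pos_of_ne_zero (by omega)
    have hkpos : (0:ℝ) < (k:ℝ) ^ η := Real.rpow_pos_of_pos hk0 η
    have hb := (sum_bounds β η lam γ hβ0 hη0 hη1 hlam hγ0 hγ1 hγ2 (k+1)).2
    push_cast at hb
    have heq : U k = (β * (((k:ℝ)+1) ^ η / η)
        + lam * (((k:ℝ)+1) ^ γ / γ)) / (k:ℝ) ^ η := by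
      rw [hUdef]
      field_simp
    rw [heq]
    exact div_le_div_of_nonneg_right' hb hkpos
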